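/- Let F be a finite field with q elements, α an antichain of size m in [n]×[m], and β an antichain in D(α). Fix M ∈ O_α. Then the number of N ∈ O_α with Piv(M−N) = β equals (q−1)^{|β|} · q^{|Down(β)∩D(α)|}, where Down(β) is the strict down-set of β in [n]×[n]. In particular, this valency is independent of M. -/
import Mathlib


open Matrix

namespace SchubertCell

/-- The strict down-set of a subset of a poset. -/
def Down {X : Type*} [Preorder X] (Y : Set X) : Set X := {x | ∃ y ∈ Y, x < y}

variable {F : Type*} [Field F] {n : ℕ}

/-- The pivot-set of a matrix: the maximal elements of the support
under the componentwise (product) order on indices. -/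
def Piv (M : Matrix (Fin n) (Fin n) F) : Set (Fin n × Fin n) :=
  {p | M p.1 p.2 ≠ 0 ∧ ∀ q : Fin n × Fin n, p < q → M q.1 q.2 = 0}

/-- Upper triangular matrix. -/
def UpperTri (G : Matrix (Fin n) (Fin n) F) : Prop := ∀ i j : Fin n, j < i → G i j = 0

/-- `M i j` is the last (largest row index) nonzero entry of column `j`. -/
def IsLast (M : Matrix (Fin n) (Fin n) F) (i j : Fin n) : Prop :=
  M i j ≠ 0 ∧ ∀ i' : Fin n, i < i' → M i' j = 0

/-- Reduced reverse column echelon form: (CE1), (CE2), (CE3). -/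
def IsRRCEF (M : Matrix (Fin n) (Fin n) F) : Prop :=
  (∀ j j' : Fin n, j ≤ j' → (∃ i, M i j' ≠ 0) → ∃ i, M i j ≠ 0) ∧
  (∀ i j i' j' : Fin n, IsLast M i j → IsLast M i' j' → j < j' → i' < i) ∧
  (∀ i j : Fin n, IsLast M i j → M i j = 1 ∧ ∀ j' : Fin n, j' ≠ j → M i j' = 0)

/-- `D(α)`: elements of the strict down-set of `α` whose row contains no element of `α`. -/
def DSet (α : Set (Fin n × Fin n)) : Set (Fin n × Fin n) :=
  {p | p ∈ Down α ∧ ∀ k : Fin n, (p.1, k) ∉ α}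

lemma isLast_unique {M : Matrix (Fin n) (Fin n) F} {i i' j : Fin n}
    (h : IsLast M i j) (h' : IsLast M i' j) : i = i' := by
  by_contra hne
  rcases lt_or_gt_of_ne hne with hlt | hlt
  · exact h'.1 (h.2 i' hlt)
  · exact h.1 (h'.2 i hlt)

lemma exists_isLast {M : Matrix (Fin n) (Fin n) F} {j : Fin n} (h : ∃ i, M i j ≠ 0) :
    ∃ i, IsLast M i j := by
  classical
  obtain ⟨i0, hi0⟩ := h
  set s : Finset (Fin n) := Finset.univ.filter fun i => M i j ≠ 0 with hs
  have hne : s.Nonempty := ⟨i0, by simp [hs, hi0]⟩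
  refine ⟨s.max' hne, ?_, ?_⟩
  · have := s.max'_mem hne
    simpa [hs] using this
  · intro i' hi'
    by_contra h0
    have hm : i' ∈ s := by simp [hs, h0]
    exact absurd (s.le_max' _ hm) (not_le.2 hi')

lemma piv_eq_isLast {M : Matrix (Fin n) (Fin n) F} (hM : IsRRCEF M) :
    Piv M = {p | IsLast M p.1 p.2} := by
  ext ⟨i, j⟩
  constructor
  · rintro ⟨h1, h2⟩
    exact ⟨h1, fun i' hi' => h2 (i', j) (Prod.mk_lt_mk.2 (Or.inl ⟨hi', le_refl j⟩))⟩
  · rintro ⟨h1, h2⟩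
    refine ⟨h1, ?_⟩
    rintro ⟨i', j'⟩ hlt
    obtain ⟨hi, hj⟩ := Prod.mk_le_mk.1 hlt.le
    rcases lt_or_eq_of_le hj with hjlt | hjeq
    · by_contra hz
      obtain ⟨c, hc⟩ := exists_isLast ⟨i', hz⟩
      have hci : c < i := hM.2.1 i j c j' ⟨h1, h2⟩ hc hjlt
      exact hz (hc.2 i' (lt_of_lt_of_le hci hi))
    · subst hjeq
      have : i ≠ i' := fun h => by subst h; exact absurd hlt (lt_irrefl _)
      exact h2 i' (lt_of_le_of_ne hi this)

/-- Support of a RRCEF matrix is contained in its pivot set union `DSet` of the pivot set. -/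
lemma support_subset {N : Matrix (Fin n) (Fin n) F} {α : Set (Fin n × Fin n)}
    (hN : IsRRCEF N) (hNα : Piv N = α) {i j : Fin n}
    (h1 : (i, j) ∉ α) (h2 : (i, j) ∉ DSet α) : N i j = 0 := by
  by_contra hz
  obtain ⟨c, hc⟩ := exists_isLast ⟨i, hz⟩
  have hcα : (c, j) ∈ α := by
    rw [← hNα, piv_eq_isLast hN]; exact hc
  have hic : i < c := by
    rcases lt_trichotomy i c with h | h | h
    · exact h
    · exact absurd (h ▸ hcα) h1
    · exact absurd (hc.2 i h) hz
  refine h2 ⟨⟨(c, j), hcα, Prod.mk_lt_mk.2 (Or.inl ⟨hic, le_refl j⟩)⟩, ?_⟩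
  intro k hk
  have hlk : IsLast N i k := by
    have := (piv_eq_isLast hN) ▸ hNα.symm ▸ hk
    exact this
  by_cases hkj : k = j
  · subst hkj
    exact absurd (isLast_unique hlk hc) (ne_of_lt hic)
  · exact hz ((hN.2.2 i k hlk).2 j (Ne.symm hkj))

lemma pivot_entry_one {N : Matrix (Fin n) (Fin n) F} {α : Set (Fin n × Fin n)}
    (hN : IsRRCEF N) (hNα : Piv N = α) {p : Fin n × Fin n} (hp : p ∈ α) :
    N p.1 p.2 = 1 := by
  have : IsLast N p.1 p.2 := by
    have := (piv_eq_isLast hN) ▸ hNα.symm ▸ hp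
    exact this
  exact (hN.2.2 p.1 p.2 this).1

lemma alpha_isLast {M : Matrix (Fin n) (Fin n) F} {α : Set (Fin n × Fin n)}
    (hM : IsRRCEF M) (hMα : Piv M = α) {p : Fin n × Fin n} (hp : p ∈ α) :
    IsLast M p.1 p.2 := by
  have := (piv_eq_isLast hM) ▸ hMα.symm ▸ hp
  exact this

lemma alpha_not_dset {α : Set (Fin n × Fin n)} {p : Fin n × Fin n} (hp : p ∈ α) :
    p ∉ DSet α := fun h => h.2 p.2 (by rwa [Prod.mk.eta])

/-- Membership in the Schubert cell `O_α` is equivalent to agreeing with `M` off `DSet α`. -/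
lemma mem_cell_iff {M : Matrix (Fin n) (Fin n) F} {α : Set (Fin n × Fin n)}
    (hM : IsRRCEF M) (hMα : Piv M = α) (N : Matrix (Fin n) (Fin n) F) :
    (IsRRCEF N ∧ Piv N = α) ↔ ∀ p : Fin n × Fin n, p ∉ DSet α → N p.1 p.2 = M p.1 p.2 := by
  constructor
  · rintro ⟨hN, hNα⟩ p hp
    by_cases hpα : p ∈ α
    · rw [pivot_entry_one hN hNα hpα, pivot_entry_one hM hMα hpα]
    · rw [support_subset hN hNα (by rwa [Prod.mk.eta]) (by rwa [Prod.mk.eta]),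
        support_subset hM hMα (by rwa [Prod.mk.eta]) (by rwa [Prod.mk.eta])]
  · intro hagree
    -- support of N is contained in α ∪ DSet α
    have hNsupp : ∀ i j : Fin n, N i j ≠ 0 → (i, j) ∈ α ∨ (i, j) ∈ DSet α := by
      intro i j hz
      by_cases hD : (i, j) ∈ DSet α
      · exact Or.inr hD
      · left
        by_contra hα
        exact hz ((hagree (i, j) hD).trans (support_subset hM hMα hα hD))
    -- any column meeting α ∪ DSet α at or after column j has a pivot in column j
    have hcolpiv : ∀ j b : Fin n, j ≤ b → (∃ a, M a b ≠ 0) →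
        ∃ c, (c, j) ∈ α ∧ IsLast M c j := by
      intro j b hjb hb
      obtain ⟨c, hc⟩ := exists_isLast (hM.1 j b hjb hb)
      exact ⟨c, by rw [← hMα, piv_eq_isLast hM]; exact hc, hc⟩
    -- IsLast for N implies membership in α
    have hlastN : ∀ i j : Fin n, IsLast N i j → (i, j) ∈ α := by
      intro i j h
      rcases hNsupp i j h.1 with hα | hD
      · exact hα
      · exfalso
        obtain ⟨⟨⟨a, b⟩, hab, hlt⟩, hrow⟩ := hD
        obtain ⟨hi, hj⟩ := Prod.mk_le_mk.1 hlt.le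
        obtain ⟨c, hcα, hc⟩ := hcolpiv j b hj ⟨a, (alpha_isLast hM hMα hab).1⟩
        have hic : i < c := by
          rcases lt_or_eq_of_le hj with hjlt | hjeq
          · exact lt_of_le_of_lt hi (hM.2.1 c j a b hc (alpha_isLast hM hMα hab) hjlt)
          · subst hjeq
            have hca : c = a := isLast_unique hc (alpha_isLast hM hMα hab)
            subst hca
            have : i ≠ c := fun h => by subst h; exact absurd hlt (lt_irrefl _)
            exact lt_of_le_of_ne hi this
        have hNc : N c j ≠ 0 := by
          rw [hagree (c, j) (alpha_not_dset hcα)]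
          exact hc.1
        exact hNc (h.2 c hic)
    have hN : IsRRCEF N := by
      refine ⟨?_, ?_, ?_⟩
      · -- CE1
        intro j j' hjj' ⟨i0, h0⟩
        have hb : ∃ (a : Fin n) (b : Fin n), j' ≤ b ∧ (a, b) ∈ α := by
          rcases hNsupp i0 j' h0 with hα | hD
          · exact ⟨i0, j', le_refl _, hα⟩
          · obtain ⟨⟨⟨a, b⟩, hab, hlt⟩, -⟩ := hD
            exact ⟨a, b, (Prod.mk_le_mk.1 hlt.le).2, hab⟩
        obtain ⟨a, b, hj'b, hab⟩ := hb
        obtain ⟨c, hcα, hc⟩ := hcolpiv j b (le_trans hjj' hj'b)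
          ⟨a, (alpha_isLast hM hMα hab).1⟩
        refine ⟨c, ?_⟩
        rw [hagree (c, j) (alpha_not_dset hcα)]
        exact hc.1
      · -- CE2
        intro i j i' j' h h' hjj'
        exact hM.2.1 i j i' j' (alpha_isLast hM hMα (hlastN i j h))
          (alpha_isLast hM hMα (hlastN i' j' h')) hjj'
      · -- CE3
        intro i j h
        have hα : (i, j) ∈ α := hlastN i j h
        constructor
        · rw [hagree (i, j) (alpha_not_dset hα)]
          exact (hM.2.2 i j (alpha_isLast hM hMα hα)).1
        · intro j' hj'
          have hα' : (i, j') ∉ α := by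
            intro hmem
            have h1 := alpha_isLast hM hMα hα
            have h2 := alpha_isLast hM hMα hmem
            rcases lt_or_gt_of_ne hj' with hlt | hlt
            · exact absurd (hM.2.1 i j' i j h2 h1 hlt) (lt_irrefl i)
            · exact absurd (hM.2.1 i j i j' h1 h2 hlt) (lt_irrefl i)
          have hD' : (i, j') ∉ DSet α := fun hD => hD.2 j hα
          rw [hagree (i, j') hD']
          exact (hM.2.2 i j (alpha_isLast hM hMα hα)).2 j' hj'
    refine ⟨hN, ?_⟩
    rw [piv_eq_isLast hN]
    ext ⟨i, j⟩
    constructor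
    · intro h
      exact hlastN i j h
    · intro hα
      refine ⟨?_, ?_⟩
      · rw [hagree (i, j) (alpha_not_dset hα)]
        exact (alpha_isLast hM hMα hα).1
      · intro i' hi'
        by_contra hz
        rcases hNsupp i' j hz with hα' | hD'
        · have ha1 : IsLast M i' j := alpha_isLast hM hMα hα'
          have ha2 : IsLast M i j := alpha_isLast hM hMα hα
          have h12 : i' = i := isLast_unique ha1 ha2
          exact lt_irrefl i (h12 ▸ hi')
        · obtain ⟨⟨⟨a, b⟩, hab, hlt⟩, -⟩ := hD'
          obtain ⟨hi2, hj2⟩ := Prod.mk_le_mk.1 hlt.le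
          rcases lt_or_eq_of_le hj2 with hjlt | hjeq
          · have : a < i := hM.2.1 i j a b (alpha_isLast hM hMα hα)
              (alpha_isLast hM hMα hab) hjlt
            exact absurd (lt_trans (lt_of_le_of_lt hi2 this) hi') (lt_irrefl _)
          · subst hjeq
            have : a = i := isLast_unique (alpha_isLast hM hMα hab) (alpha_isLast hM hMα hα)
            subst this
            exact absurd (lt_of_lt_of_le hi' hi2) (lt_irrefl _)

/-- For an antichain `β`, `Piv G = β` iff `G` is nonzero on `β` and vanishes off `β ∪ Down β`. -/
lemma piv_eq_antichain_iff {G : Matrix (Fin n) (Fin n) F} {β : Set (Fin n × Fin n)}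
    (hβ : IsAntichain (· ≤ ·) β) :
    Piv G = β ↔ (∀ p ∈ β, G p.1 p.2 ≠ 0) ∧
      ∀ p : Fin n × Fin n, p ∉ β → p ∉ Down β → G p.1 p.2 = 0 := by
  constructor
  · intro h
    refine ⟨fun p hp => ((h ▸ hp : p ∈ Piv G)).1, ?_⟩
    intro p hp1 hp2
    by_contra hz
    obtain ⟨b, hpb, hbmax⟩ :=
      Set.Finite.exists_le_maximal (Set.toFinite {x : Fin n × Fin n | G x.1 x.2 ≠ 0}) hz
    have hbPiv : b ∈ Piv G := by
      refine ⟨hbmax.1, fun r hr => ?_⟩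
      by_contra hrz
      exact absurd (hbmax.2 hrz hr.le) hr.not_ge
    have hbβ : b ∈ β := h ▸ hbPiv
    rcases eq_or_lt_of_le hpb with heq | hlt
    · exact hp1 (heq ▸ hbβ)
    · exact hp2 ⟨b, hbβ, hlt⟩
  · rintro ⟨h1, h2⟩
    ext p
    constructor
    · rintro ⟨hz, hmax⟩
      by_contra hpβ
      by_cases hpd : p ∈ Down β
      · obtain ⟨b, hb, hlt⟩ := hpd
        exact h1 b hb (hmax b hlt)
      · exact hz (h2 p hpβ hpd)
    · intro hp
      refine ⟨h1 p hp, fun r hr => ?_⟩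
      have hrβ : r ∉ β := fun hrb => hβ hp hrb (ne_of_lt hr) hr.le
      have hrd : r ∉ Down β := by
        rintro ⟨b, hb, hlt⟩
        exact hβ hp hb (ne_of_lt (lt_trans hr hlt)) (lt_trans hr hlt).le
      exact h2 r hrβ hrd

theorem schubert_cell_valency {F : Type*} [Field F] [Fintype F] {n m q : ℕ}
    (hq : Fintype.card F = q) (hm1 : 1 ≤ m) (hm2 : m ≤ n - 1)
    (α : Set (Fin n × Fin n)) (hanti : IsAntichain (· ≤ ·) α)
    (hcol : ∀ p ∈ α, (p.2 : ℕ) < m) (hcard : α.ncard = m)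
    (β : Set (Fin n × Fin n)) (hβanti : IsAntichain (· ≤ ·) β) (hβ : β ⊆ DSet α)
    (M : Matrix (Fin n) (Fin n) F) (hM : IsRRCEF M) (hMα : Piv M = α) :
    Set.ncard {N : Matrix (Fin n) (Fin n) F |
        (IsRRCEF N ∧ Piv N = α) ∧ Piv (M - N) = β} =
      (q - 1) ^ β.ncard * q ^ (Down β ∩ DSet α).ncard := by
  classical
  -- β is disjoint from its strict down-set
  have hdisj : ∀ p ∈ β, p ∉ Down β := by
    rintro p hp ⟨b, hb, hlt⟩
    exact hβanti hp hb (ne_of_lt hlt) hlt.le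
  -- rewrite the set
  have hset : {N : Matrix (Fin n) (Fin n) F |
      (IsRRCEF N ∧ Piv N = α) ∧ Piv (M - N) = β} =
      {N : Matrix (Fin n) (Fin n) F |
        (∀ p ∈ β, N p.1 p.2 ≠ M p.1 p.2) ∧
        ∀ p : Fin n × Fin n, p ∉ β → p ∉ Down β ∩ DSet α → N p.1 p.2 = M p.1 p.2} := by
    ext N
    simp only [Set.mem_setOf_eq]
    rw [mem_cell_iff hM hMα, piv_eq_antichain_iff hβanti]
    simp only [Matrix.sub_apply]
    constructor
    · rintro ⟨hO, hne, hzero⟩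
      refine ⟨fun p hp h => hne p hp (by rw [h, sub_self]), ?_⟩
      intro p hp1 hp2
      by_cases hD : p ∈ DSet α
      · have hnd : p ∉ Down β := fun h => hp2 ⟨h, hD⟩
        exact (sub_eq_zero.1 (hzero p hp1 hnd)).symm
      · exact hO p hD
    · rintro ⟨hne, hagree⟩
      have hO : ∀ p : Fin n × Fin n, p ∉ DSet α → N p.1 p.2 = M p.1 p.2 := by
        intro p hD
        exact hagree p (fun hp => hD (hβ hp)) (fun hp => hD hp.2)
      refine ⟨hO, ?_, ?_⟩
      · intro p hp
        exact sub_ne_zero.2 (fun h => hne p hp h.symm)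
      · intro p hp1 hp2
        rw [hagree p hp1 (fun h => hp2 h.1), sub_self]
  rw [hset, ← Nat.card_coe_set_eq, Set.coe_setOf]
  -- the bijection with pairs of functions
  have hT12 : ∀ p ∈ (Down β ∩ DSet α), p ∉ β := fun p hp hp1 => hdisj p hp1 hp.1
  let e : {N : Matrix (Fin n) (Fin n) F //
      (∀ p ∈ β, N p.1 p.2 ≠ M p.1 p.2) ∧
      ∀ p : Fin n × Fin n, p ∉ β → p ∉ Down β ∩ DSet α → N p.1 p.2 = M p.1 p.2} ≃
      (β → {x : F // x ≠ 0}) × ((Down β ∩ DSet α : Set (Fin n × Fin n)) → F) :=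
    { toFun := fun N =>
        (fun p => ⟨N.1 p.1.1 p.1.2 - M p.1.1 p.1.2, sub_ne_zero.2 (N.2.1 p.1 p.2)⟩,
         fun p => N.1 p.1.1 p.1.2),
      invFun := fun fg =>
        ⟨fun i j => if h1 : (i, j) ∈ β then M i j + (fg.1 ⟨(i, j), h1⟩ : F)
          else if h2 : (i, j) ∈ Down β ∩ DSet α then fg.2 ⟨(i, j), h2⟩ else M i j, by
          constructor
          · intro p hp
            have hp1 : (p.1, p.2) ∈ β := by rwa [Prod.mk.eta]
            simp only [dif_pos hp1]
            intro h
            exact (fg.1 ⟨(p.1, p.2), hp1⟩).2 (by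
              have := add_eq_left.1 h
              exact this)
          · intro p hp1 hp2
            have hp1' : (p.1, p.2) ∉ β := by rwa [Prod.mk.eta]
            have hp2' : (p.1, p.2) ∉ Down β ∩ DSet α := by rwa [Prod.mk.eta]
            simp only [dif_neg hp1', dif_neg hp2']⟩,
      left_inv := by
        rintro ⟨N, hN1, hN2⟩
        apply Subtype.ext
        funext i j
        dsimp only
        by_cases h1 : (i, j) ∈ β
        · rw [dif_pos h1]
          ring
        · rw [dif_neg h1]
          by_cases h2 : (i, j) ∈ Down β ∩ DSet α
          · rw [dif_pos h2]
          · rw [dif_neg h2]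
            exact (hN2 (i, j) h1 h2).symm,
      right_inv := by
        rintro ⟨f, g⟩
        refine Prod.ext ?_ ?_
        · funext p
          apply Subtype.ext
          dsimp only
          rw [Prod.mk.eta, dif_pos p.2]
          ring
        · funext p
          dsimp only
          rw [Prod.mk.eta, dif_neg (hT12 p p.2), dif_pos p.2] }
  rw [Nat.card_congr e, Nat.card_prod, Nat.card_fun, Nat.card_fun]
  have h1 : Nat.card {x : F // x ≠ 0} = q - 1 := by
    rw [Nat.card_congr (unitsEquivNeZero (G₀ := F)).symm, Nat.card_eq_fintype_card,
      Fintype.card_units, hq]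
  have h2 : Nat.card F = q := by rw [Nat.card_eq_fintype_card, hq]
  rw [h1, h2, Nat.card_coe_set_eq, Nat.card_coe_set_eq]

end SchubertCell
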